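/- Let θ be an irrational real number, let 0 < a < b < 1, and let ε > 0. Then there exists a natural number n₀ = n(θ, ε, a, b) such that for any reals α, β > 0 satisfying {β} < {α} and b − a + ε < {α} − {β} < 1 − ε, there exists a natural number k ≤ n₀ with {β + kθ} < a and {α + kθ} > b. -/

import Mathlib

private lemma fract_pos_of_irrational (θ : ℝ) (hθ : Irrational θ) {k : ℕ} (hk : 0 < k) :
    0 < Int.fract ((k : ℝ) * θ) := by
  rcases (Int.fract_nonneg ((k : ℝ) * θ)).lt_or_eq with h | h
  · exact h
  · exfalso
    have hirr : Irrational ((k : ℝ) * θ) := hθ.natCast_mul hk.ne'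
    apply hirr.ne_int ⌊(k : ℝ) * θ⌋
    have h' : (k : ℝ) * θ - ⌊(k : ℝ) * θ⌋ = 0 := by
      rw [Int.self_sub_floor]; exact h.symm
    linarith

private lemma exists_small_fract (θ : ℝ) (hθ : Irrational θ) {η : ℝ} (hη : 0 < η) :
    ∃ k : ℕ, 0 < k ∧ 0 < Int.fract ((k : ℝ) * θ) ∧ Int.fract ((k : ℝ) * θ) < η := by
  set η' : ℝ := min η 1 / 2 with hη'def
  have hη'0 : 0 < η' := by positivity
  have hη'η : η' < η := by
    have : min η 1 ≤ η := min_le_left _ _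
    nlinarith
  have hη'1 : η' < 1 := by
    have : min η 1 ≤ 1 := min_le_right _ _
    nlinarith
  obtain ⟨n, hn⟩ := exists_nat_gt (1 / η')
  have hn_pos : 0 < n := by
    have h0 : (0 : ℝ) < n := lt_trans (by positivity) hn
    exact_mod_cast h0
  obtain ⟨k, hk0, hkn, hk⟩ := Real.exists_nat_abs_mul_sub_round_le θ hn_pos
  have hlt : |(k : ℝ) * θ - (round ((k : ℝ) * θ) : ℤ)| < η' := by
    have h1 : (1 : ℝ) / (n + 1) < η' := by
      rw [div_lt_iff₀ (by positivity)]
      rw [div_lt_iff₀ hη'0] at hn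
      nlinarith
    exact lt_of_le_of_lt hk h1
  set r : ℤ := round ((k : ℝ) * θ) with hr
  set x : ℝ := (k : ℝ) * θ - (r : ℝ) with hx
  rcases le_or_gt 0 x with hx0 | hx0
  · refine ⟨k, hk0, fract_pos_of_irrational θ hθ hk0, ?_⟩
    have habs : x < η' := by rwa [abs_of_nonneg hx0] at hlt
    have hfr : Int.fract ((k : ℝ) * θ) = x := by
      have hsum : (k : ℝ) * θ = x + (r : ℝ) := by rw [hx]; ring
      rw [hsum, Int.fract_add_intCast, Int.fract_eq_self.mpr ⟨hx0, by linarith⟩]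
    rw [hfr]; linarith
  · set y : ℝ := -x with hy
    have hy0 : 0 < y := by rw [hy]; linarith
    have hyη : y < η' := by rwa [abs_of_neg hx0] at hlt
    set j : ℕ := ⌊1 / y⌋₊ with hj
    have hfl : (j : ℝ) ≤ 1 / y := Nat.floor_le (by positivity)
    have hj1 : 1 ≤ j := by
      apply Nat.le_floor
      rw [Nat.cast_one, le_div_iff₀ hy0]
      linarith
    have hjy_le : (j : ℝ) * y ≤ 1 := by
      have := mul_le_mul_of_nonneg_right hfl hy0.le
      rwa [one_div, inv_mul_cancel₀ hy0.ne'] at this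
    have hjy_gt : 1 < ((j : ℝ) + 1) * y := by
      have h2 := Nat.lt_floor_add_one (1 / y)
      rw [← hj] at h2
      have := mul_lt_mul_of_pos_right h2 hy0
      rwa [one_div, inv_mul_cancel₀ hy0.ne'] at this
    have hjk_pos : 0 < j * k := Nat.mul_pos hj1 hk0
    refine ⟨j * k, hjk_pos, fract_pos_of_irrational θ hθ hjk_pos, ?_⟩
    have hpos := fract_pos_of_irrational θ hθ hjk_pos
    have hkθ : (k : ℝ) * θ = (r : ℝ) - y := by rw [hy, hx]; ring
    have hkey : ((j * k : ℕ) : ℝ) * θ = ((j * r : ℤ) : ℝ) + (-((j : ℝ) * y)) := by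
      push_cast
      linear_combination (j : ℝ) * hkθ
    rcases eq_or_lt_of_le hjy_le with heq | hlt1
    · exfalso
      have hz : Int.fract (((j * k : ℕ) : ℝ) * θ) = 0 := by
        rw [hkey, heq]
        have h3 : ((j * r : ℤ) : ℝ) + (-1 : ℝ) = ((j * r - 1 : ℤ) : ℝ) := by push_cast; ring
        rw [h3, Int.fract_intCast]
      rw [hz] at hpos; exact lt_irrefl 0 hpos
    · have hjy_pos : 0 < (j : ℝ) * y := by
        have hj0 : (0 : ℝ) < (j : ℝ) := by exact_mod_cast hj1
        positivity
      have hfr : Int.fract (((j * k : ℕ) : ℝ) * θ) = 1 - (j : ℝ) * y := by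
        rw [hkey, Int.fract_intCast_add]
        have h3 : -((j : ℝ) * y) = (1 - (j : ℝ) * y) + ((-1 : ℤ) : ℝ) := by push_cast; ring
        rw [h3, Int.fract_add_intCast, Int.fract_eq_self.mpr ⟨by linarith, by linarith⟩]
      rw [hfr]
      have hexp : ((j : ℝ) + 1) * y = (j : ℝ) * y + y := by ring
      rw [hexp] at hjy_gt
      linarith

/-- Let `θ` be irrational, `0 < a < b < 1`, `ε > 0`. Then there exists
`n₀ = n(θ, ε, a, b)` such that for any reals `α, β > 0` with `{β} < {α}` and
`b - a + ε < {α} - {β} < 1 - ε`, there exists `k ≤ n₀` with `{β + kθ} < a` and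
`{α + kθ} > b`. -/
theorem stmt6 (θ : ℝ) (hθ : Irrational θ) (a b ε : ℝ)
    (ha : 0 < a) (hab : a < b) (hb : b < 1) (hε : 0 < ε) :
    ∃ n₀ : ℕ, ∀ α β : ℝ, 0 < α → 0 < β → Int.fract β < Int.fract α →
      b - a + ε < Int.fract α - Int.fract β → Int.fract α - Int.fract β < 1 - ε →
      ∃ k : ℕ, k ≤ n₀ ∧ Int.fract (β + (k : ℝ) * θ) < a ∧ b < Int.fract (α + (k : ℝ) * θ) := by
  set δ : ℝ := min a (min ε (1 - b)) with hδdef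
  have hδ0 : 0 < δ := lt_min ha (lt_min hε (by linarith))
  have hδa : δ ≤ a := min_le_left _ _
  have hδε : δ ≤ ε := le_trans (min_le_right _ _) (min_le_left _ _)
  have hδb : δ ≤ 1 - b := le_trans (min_le_right _ _) (min_le_right _ _)
  obtain ⟨k₀, hk₀pos, hs0, hsη⟩ := exists_small_fract θ hθ (show (0:ℝ) < δ / 3 by linarith)
  set s : ℝ := Int.fract ((k₀ : ℝ) * θ) with hsdef
  refine ⟨(⌈1 / s⌉₊ + 1) * k₀, ?_⟩
  intro α β hα hβ hfr hd1 hd2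
  set d : ℝ := Int.fract α - Int.fract β with hddef
  have hd0 : 0 < d := by rw [hddef]; linarith
  set t : ℝ := Int.fract β with htdef
  set c : ℝ := max 0 (b - d) with hcdef
  set e : ℝ := min a (1 - d) with hedef
  have hce : c + δ ≤ e := by
    rcases le_or_gt b d with h | h
    · have hc : c = 0 := by rw [hcdef]; apply max_eq_left; linarith
      rw [hc, zero_add]
      exact le_min (by linarith) (by linarith)
    · have hc : c = b - d := by rw [hcdef]; apply max_eq_right; linarith
      rw [hc]
      exact le_min (by linarith) (by linarith)
  have h3s : 3 * s < δ := by linarith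
  set m : ℝ := (c + e) / 2 with hmdef
  have hc0 : 0 ≤ c := le_max_left _ _
  have hcm : c < m := by rw [hmdef]; linarith
  have hme : m < e := by rw [hmdef]; linarith
  have hm0 : 0 ≤ m := le_trans hc0 hcm.le
  have hm1 : m < 1 := lt_of_lt_of_le hme (le_trans (min_le_left _ _) (by linarith))
  have hmc2 : c + δ / 2 ≤ m := by rw [hmdef]; linarith
  set u : ℝ := Int.fract (m - t) with hudef
  have hu0 : 0 ≤ u := Int.fract_nonneg _
  have hu1 : u < 1 := Int.fract_lt_one _
  set j : ℕ := ⌊u / s⌋₊ with hjdef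
  have hjs_le : (j : ℝ) * s ≤ u := by
    have hfl : (j : ℝ) ≤ u / s := Nat.floor_le (by positivity)
    calc (j : ℝ) * s ≤ (u / s) * s := mul_le_mul_of_nonneg_right hfl hs0.le
      _ = u := by field_simp
  have hjs_gt : u < ((j : ℝ) + 1) * s := by
    have h2 := Nat.lt_floor_add_one (u / s)
    rw [← hjdef] at h2
    have h3 := mul_lt_mul_of_pos_right h2 hs0
    rwa [div_mul_cancel₀ _ hs0.ne'] at h3
  set r : ℝ := u - (j : ℝ) * s with hrdef
  have hr0 : 0 ≤ r := by rw [hrdef]; linarith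
  have hrs : r < s := by
    rw [hrdef]
    have : ((j : ℝ) + 1) * s = (j : ℝ) * s + s := by ring
    linarith [this ▸ hjs_gt]
  have hmc : c < m - r := by linarith
  have hmr1 : m - r < 1 := by linarith
  -- key : fract (t + j * s) = m - r
  have hu_eq : u = (m - t) - (⌊m - t⌋ : ℝ) := by rw [hudef, Int.fract]
  have hval : Int.fract (t + (j : ℝ) * s) = m - r := by
    have heq : t + (j : ℝ) * s = (m - r) + ((-⌊m - t⌋ : ℤ) : ℝ) := by
      push_cast
      linear_combination hrdef + hu_eq
    rw [heq, Int.fract_add_intCast, Int.fract_eq_self.mpr ⟨by linarith, hmr1⟩]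
  -- fract (β + (j * k₀) θ) = m - r
  have hβ' : β = t + (⌊β⌋ : ℝ) := by rw [htdef, Int.fract]; ring
  have hk₀θ : (k₀ : ℝ) * θ = s + (⌊(k₀ : ℝ) * θ⌋ : ℝ) := by rw [hsdef, Int.fract]; ring
  have hβk : Int.fract (β + ((j * k₀ : ℕ) : ℝ) * θ) = m - r := by
    have heq : β + ((j * k₀ : ℕ) : ℝ) * θ
        = (t + (j : ℝ) * s) + ((⌊β⌋ + j * ⌊(k₀ : ℝ) * θ⌋ : ℤ) : ℝ) := by
      push_cast
      linear_combination hβ' + (j : ℝ) * hk₀θ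
    rw [heq, Int.fract_add_intCast, hval]
  refine ⟨j * k₀, ?_, ?_, ?_⟩
  · have h1 : (j : ℝ) ≤ u / s := Nat.floor_le (by positivity)
    have h2 : u / s < 1 / s := by gcongr
    have h3 : (1 : ℝ) / s ≤ (⌈1 / s⌉₊ : ℝ) := Nat.le_ceil _
    have h4 : (j : ℝ) < (⌈1 / s⌉₊ : ℝ) := by linarith
    have h5 : j < ⌈1 / s⌉₊ := by exact_mod_cast h4
    exact Nat.mul_le_mul_right k₀ (by omega)
  · rw [hβk]
    have : m < a := lt_of_lt_of_le hme (min_le_left _ _)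
    linarith
  · have hα' : α = Int.fract α + (⌊α⌋ : ℝ) := by rw [Int.fract]; ring
    have hβfloor : β + ((j * k₀ : ℕ) : ℝ) * θ
        = (m - r) + (⌊β + ((j * k₀ : ℕ) : ℝ) * θ⌋ : ℝ) := by
      rw [← hβk, Int.fract]; ring
    have hαβ : α = β + d + ((⌊α⌋ : ℝ) - (⌊β⌋ : ℝ)) := by
      rw [hddef, htdef] at *
      linear_combination hα' - hβ'
    have heq : α + ((j * k₀ : ℕ) : ℝ) * θ
        = ((m - r) + d) + ((⌊β + ((j * k₀ : ℕ) : ℝ) * θ⌋ + ⌊α⌋ - ⌊β⌋ : ℤ) : ℝ) := by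
      push_cast at hβfloor ⊢
      linear_combination hαβ + hβfloor
    have hmd1 : (m - r) + d < 1 := by
      have : m < 1 - d := lt_of_lt_of_le hme (min_le_right _ _)
      linarith
    have hmdb : b < (m - r) + d := by
      have hbd : b - d ≤ c := le_max_right _ _
      linarith
    rw [heq, Int.fract_add_intCast, Int.fract_eq_self.mpr ⟨by linarith, hmd1⟩]
    exact hmdb
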